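/- Let π : H → G be a surjective group homomorphism with finite kernel N, let μ : G → ℝ be a finitely supported function, and define ζ : H → ℝ by ζ(h) = μ(π(h)) / |N|. Then for every n ≥ 1 and every subset A ⊆ G, the total mass that the n-fold convolution power ζ^{*n} assigns to the preimage π⁻¹(A) equals the total mass that μ^{*n} assigns to A; that is, ∑_{h ∈ π⁻¹(A)} ζ^{*n}(h) = ∑_{a ∈ A} μ^{*n}(a). -/

import Mathlib

open Finset

/-- Let `π : H → G` be a surjective group homomorphism with finite kernel `N`, let `μ` be a
finitely supported real-valued function on `G` (an element of the monoid algebra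
`MonoidAlgebra ℝ G`, whose multiplication is convolution), and let `ζ` be the finitely
supported function on `H` given by `ζ(h) = μ(π(h)) / |N|`. Then for every `n ≥ 1` and every
subset `A ⊆ G`, the total mass of the `n`-fold convolution power `ζ^{*n}` on `π⁻¹(A)` equals
the total mass of `μ^{*n}` on `A`. -/
theorem convolution_power_lift_mass {G H : Type*} [Group G] [Group H]
    (π : H →* G) (hπ : Function.Surjective π) (hker : Finite π.ker)
    (μ : MonoidAlgebra ℝ G) (ζ : MonoidAlgebra ℝ H)
    (hζ : ∀ h : H, ζ.coeff h = μ.coeff (π h) / (Nat.card π.ker))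
    (n : ℕ) (hn : 1 ≤ n) (A : Set G) [DecidablePred (· ∈ A)] :
    ∑ h ∈ (ζ ^ n).coeff.support.filter (fun h => π h ∈ A), (ζ ^ n).coeff h
      = ∑ a ∈ (μ ^ n).coeff.support.filter (fun a => a ∈ A), (μ ^ n).coeff a := by
  classical
  have hcard : (Nat.card π.ker : ℝ) ≠ 0 := by
    exact_mod_cast (Nat.card_pos (α := π.ker)).ne'
  -- mapDomain applied pointwise
  have hmapapply : ∀ (f : MonoidAlgebra ℝ H) (a : G),
      Finsupp.mapDomain π f.coeff a = ∑ h ∈ f.coeff.support.filter (fun h => π h = a), f.coeff h := by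
    intro f a
    rw [Finsupp.mapDomain, Finsupp.sum_apply, Finsupp.sum, Finset.sum_filter]
    exact Finset.sum_congr rfl fun h _ => by rw [Finsupp.single_apply]
  -- mapDomain π ζ = μ
  have hmap : Finsupp.mapDomain π ζ.coeff = μ.coeff := by
    ext a
    rw [hmapapply]
    obtain ⟨h0, hh0⟩ := hπ a
    by_cases hμa : μ.coeff a = 0
    · rw [hμa]
      apply Finset.sum_eq_zero
      intro h hh
      rw [Finset.mem_filter] at hh
      rw [hζ, hh.2, hμa, zero_div]
    · -- fiber finset
      have hfin : (π ⁻¹' {a}).Finite := by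
        have : π ⁻¹' {a} = (fun k : π.ker => h0 * (k : H)) '' Set.univ := by
          ext h
          simp only [Set.mem_preimage, Set.mem_singleton_iff, Set.image_univ, Set.mem_range]
          constructor
          · intro hh
            refine ⟨⟨h0⁻¹ * h, ?_⟩, by group⟩
            simp [π.mem_ker, map_mul, hh0, hh]
          · rintro ⟨k, rfl⟩
            have := k.2
            rw [π.mem_ker] at this
            simp [map_mul, this, hh0]
        rw [this]
        exact (Set.finite_univ).image _
      have hfilter : (ζ.coeff.support.filter (fun h => π h = a)) = hfin.toFinset := by
        ext h
        simp only [Finset.mem_filter, Finsupp.mem_support_iff, Set.Finite.mem_toFinset,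
          Set.mem_preimage, Set.mem_singleton_iff]
        constructor
        · exact fun hh => hh.2
        · intro hh
          refine ⟨?_, hh⟩
          rw [hζ, hh]
          exact div_ne_zero hμa hcard
      rw [hfilter]
      have hval : ∀ h ∈ hfin.toFinset, ζ.coeff h = μ.coeff a / (Nat.card π.ker) := by
        intro h hh
        rw [Set.Finite.mem_toFinset, Set.mem_preimage, Set.mem_singleton_iff] at hh
        rw [hζ, hh]
      rw [Finset.sum_congr rfl hval, Finset.sum_const, nsmul_eq_mul]
      have hc : (hfin.toFinset.card : ℝ) = (Nat.card π.ker : ℝ) := by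
        congr 1
        rw [← Set.ncard_eq_toFinset_card _ hfin, ← Nat.card_coe_set_eq]
        apply Nat.card_congr
        exact Equiv.symm {
          toFun := fun k => ⟨h0 * (k : H), by
            have := k.2; rw [π.mem_ker] at this
            simp [Set.mem_preimage, map_mul, this, hh0]⟩
          invFun := fun h => ⟨h0⁻¹ * (h : H), by
            have := h.2
            simp only [Set.mem_preimage, Set.mem_singleton_iff] at this
            simp [π.mem_ker, map_mul, hh0, this]⟩
          left_inv := fun k => by ext; group
          right_inv := fun h => by ext; group }
      rw [hc, mul_div_cancel₀ _ hcard]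
  -- mapDomain π (ζ^n) = μ^n
  have hpow : Finsupp.mapDomain π (ζ ^ n).coeff = (μ ^ n).coeff := by
    have h1 : MonoidAlgebra.mapDomain π ζ = μ := by
      rw [MonoidAlgebra.mapDomain, hmap]
    have := map_pow (MonoidAlgebra.mapDomainRingHom ℝ π) ζ n
    rw [MonoidAlgebra.mapDomainRingHom_apply, MonoidAlgebra.mapDomainRingHom_apply, h1] at this
    rw [← this]; rfl
  -- fiberwise sum
  set f := ζ ^ n with hf
  set T := (f.coeff.support.image π).filter (fun a => a ∈ A) with hT
  have step1 : ∑ h ∈ f.coeff.support.filter (fun h => π h ∈ A), f.coeff h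
      = ∑ a ∈ T, ∑ h ∈ (f.coeff.support.filter (fun h => π h ∈ A)).filter (fun h => π h = a), f.coeff h := by
    refine (Finset.sum_fiberwise_of_maps_to ?_ f.coeff).symm
    intro h hh
    rw [Finset.mem_filter] at hh
    rw [hT, Finset.mem_filter]
    exact ⟨Finset.mem_image_of_mem π hh.1, hh.2⟩
  have step2 : ∀ a ∈ T, ∑ h ∈ (f.coeff.support.filter (fun h => π h ∈ A)).filter (fun h => π h = a), f.coeff h
      = (μ ^ n).coeff a := by
    intro a ha
    rw [hT, Finset.mem_filter] at ha
    rw [← hpow, hmapapply]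
    apply Finset.sum_congr _ (fun _ _ => rfl)
    ext h
    simp only [Finset.mem_filter]
    constructor
    · exact fun hh => ⟨hh.1.1, hh.2⟩
    · intro hh
      exact ⟨⟨hh.1, hh.2 ▸ ha.2⟩, hh.2⟩
  rw [step1, Finset.sum_congr rfl step2]
  -- compare T with support filter
  refine (Finset.sum_subset ?_ ?_).symm
  · intro a ha
    rw [Finset.mem_filter] at ha
    rw [hT, Finset.mem_filter]
    refine ⟨?_, ha.2⟩
    have : a ∈ (Finsupp.mapDomain π f.coeff).support := by rw [hpow]; exact ha.1
    exact Finsupp.mapDomain_support this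
  · intro a ha hna
    rw [hT, Finset.mem_filter] at ha
    rw [Finset.mem_filter] at hna
    by_contra hne
    exact hna ⟨Finsupp.mem_support_iff.mpr hne, ha.2⟩
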